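/- Projection Slice Theorem: For f ∈ L¹(ℝ²) (or Schwartz), for all θ ∈ [0, π) and ξ ∈ ℝ, the one-dimensional Fourier transform of the Radon projection R_θ f at ξ equals the two-dimensional Fourier transform of f evaluated at (ξ cos θ, ξ sin θ). -/

import Mathlib

open Real MeasureTheory

noncomputable def rotEquiv (c s : ℝ) (h : c ^ 2 + s ^ 2 = 1) : (ℝ × ℝ) ≃ₗ[ℝ] (ℝ × ℝ) :=
  LinearEquiv.ofLinear
    (((c • LinearMap.fst ℝ ℝ ℝ) - (s • LinearMap.snd ℝ ℝ ℝ)).prod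
      ((s • LinearMap.fst ℝ ℝ ℝ) + (c • LinearMap.snd ℝ ℝ ℝ)))
    (((c • LinearMap.fst ℝ ℝ ℝ) + (s • LinearMap.snd ℝ ℝ ℝ)).prod
      (((-s) • LinearMap.fst ℝ ℝ ℝ) + (c • LinearMap.snd ℝ ℝ ℝ)))
    (by
      apply LinearMap.ext
      rintro ⟨x, y⟩
      simp [Prod.ext_iff]
      exact ⟨by linear_combination x * h, by linear_combination y * h⟩)
    (by
      apply LinearMap.ext
      rintro ⟨x, y⟩
      simp [Prod.ext_iff]
      exact ⟨by linear_combination x * h, by linear_combination y * h⟩)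

theorem rotEquiv_apply (c s : ℝ) (h : c ^ 2 + s ^ 2 = 1) (p : ℝ × ℝ) :
    rotEquiv c s h p = (c * p.1 - s * p.2, s * p.1 + c * p.2) := by
  simp [rotEquiv, Prod.ext_iff, mul_comm]

theorem rotEquiv_det (c s : ℝ) (h : c ^ 2 + s ^ 2 = 1) :
    LinearMap.det ((rotEquiv c s h : (ℝ × ℝ) ≃ₗ[ℝ] (ℝ × ℝ)) : (ℝ × ℝ) →ₗ[ℝ] (ℝ × ℝ)) = 1 := by
  rw [← LinearMap.det_toMatrix (Module.Basis.finTwoProd ℝ), Matrix.det_fin_two]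
  simp [LinearMap.toMatrix_apply, Module.Basis.finTwoProd_zero, Module.Basis.finTwoProd_one,
    Module.Basis.coe_finTwoProd_repr, rotEquiv]
  linear_combination h

theorem rotEquiv_measurePreserving (c s : ℝ) (h : c ^ 2 + s ^ 2 = 1) :
    MeasurePreserving (rotEquiv c s h) volume volume := by
  refine ⟨((rotEquiv c s h).toLinearMap.continuous_of_finiteDimensional).measurable, ?_⟩
  have := Measure.map_linearMap_addHaar_eq_smul_addHaar (volume : Measure (ℝ × ℝ))
    (f := (rotEquiv c s h).toLinearMap) (by rw [rotEquiv_det]; norm_num)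
  simpa [rotEquiv_det c s h] using this

theorem rotEquiv_measurableEmbedding (c s : ℝ) (h : c ^ 2 + s ^ 2 = 1) :
    MeasurableEmbedding (rotEquiv c s h) :=
  (rotEquiv c s h).toContinuousLinearEquiv.toHomeomorph.measurableEmbedding

/-- Projection Slice Theorem: the 1D Fourier transform of the Radon projection `R_θ f`
at `ξ` equals the 2D Fourier transform of `f` at `(ξ cos θ, ξ sin θ)`. -/
theorem projection_slice_theorem
    (f : ℝ × ℝ → ℂ) (hf : Integrable f) :
    ∀ θ ∈ Set.Ico (0 : ℝ) π, ∀ ξ : ℝ,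
      (∫ t : ℝ, (∫ s : ℝ, f (t * cos θ - s * sin θ, t * sin θ + s * cos θ)) *
          Complex.exp (-Complex.I * (ξ * t : ℝ))) =
        ∫ x : ℝ × ℝ, f x *
          Complex.exp (-Complex.I * ((ξ * cos θ * x.1 + ξ * sin θ * x.2 : ℝ) : ℂ)) := by
  intro θ hθ ξ
  have h : cos θ ^ 2 + sin θ ^ 2 = 1 := cos_sq_add_sin_sq θ
  set R := rotEquiv (cos θ) (sin θ) h with hR
  set g : ℝ × ℝ → ℂ := fun x =>
    f x * Complex.exp (-Complex.I * ((ξ * cos θ * x.1 + ξ * sin θ * x.2 : ℝ) : ℂ)) with hgdef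
  have hgint : Integrable g := by
    have : Integrable (fun x : ℝ × ℝ =>
        Complex.exp (-Complex.I * ((ξ * cos θ * x.1 + ξ * sin θ * x.2 : ℝ) : ℂ)) * f x) := by
      refine hf.bdd_mul (c := 1) ?_ (Filter.Eventually.of_forall fun x => ?_)
      · apply Continuous.aestronglyMeasurable
        fun_prop
      · rw [Complex.norm_exp]
        simp
    simpa [hgdef, mul_comm] using this
  have hcomp : Integrable (fun p : ℝ × ℝ => g (R p)) :=
    ((rotEquiv_measurePreserving _ _ h).integrable_comp_emb
      (rotEquiv_measurableEmbedding _ _ h)).2 hgint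
  calc (∫ t : ℝ, (∫ s : ℝ, f (t * cos θ - s * sin θ, t * sin θ + s * cos θ)) *
          Complex.exp (-Complex.I * (ξ * t : ℝ)))
      = ∫ t : ℝ, ∫ s : ℝ, g (R (t, s)) := by
        refine integral_congr_ae (Filter.Eventually.of_forall fun t => ?_)
        show (∫ s : ℝ, f (t * cos θ - s * sin θ, t * sin θ + s * cos θ)) *
            Complex.exp (-Complex.I * (ξ * t : ℝ)) = ∫ s : ℝ, g (R (t, s))
        rw [← integral_mul_const]
        refine integral_congr_ae (Filter.Eventually.of_forall fun s => ?_)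
        simp only [hR]
        rw [rotEquiv_apply]
        have key : ξ * cos θ * (cos θ * t - sin θ * s) + ξ * sin θ * (sin θ * t + cos θ * s)
            = ξ * t := by linear_combination ξ * t * h
        have h1 : (t * cos θ - s * sin θ, t * sin θ + s * cos θ) =
            ((cos θ * t - sin θ * s, sin θ * t + cos θ * s) : ℝ × ℝ) := by
          rw [Prod.ext_iff]; constructor <;> ring
        simp only [hgdef]
        rw [h1, key]
    _ = ∫ p : ℝ × ℝ, g (R p) := by
        rw [Measure.volume_eq_prod]
        exact integral_integral (by rwa [← Measure.volume_eq_prod])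
    _ = ∫ x : ℝ × ℝ, g x :=
        (rotEquiv_measurePreserving _ _ h).integral_comp (rotEquiv_measurableEmbedding _ _ h) g
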